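/- arXiv:1007.0473 — 2 statements merged into one kernel-verified Lean document; each statement's English description precedes it below -/
import Mathlib

section
/- Let 𝔛 be a symmetric association scheme of class d ≥ 2 such that θ*_0, θ*_1, …, θ*_d are mutually distinct. Suppose there exists l ∈ {2, 3, …, d} such that for every i ∈ {1, 2, …, d}, ∏_{j=1, j≠i}^d (θ*_0 − θ*_j)/(θ*_i − θ*_j) = −p_i(l). Then 𝔛 is a Q-polynomial scheme with respect to E_1, i.e., Q-polynomial with respect to some ordering E_0, E_1, E_{i_2}, …, E_{i_d} of its primitive idempotents. -/
open Matrix BigOperators Finset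

/-- A symmetric association scheme of class `d` on a finite vertex set `V`,
bundled together with its adjacency matrices, primitive idempotents,
eigenmatrices `P`, `Q` and Krein parameters. -/
structure SymmAssocScheme (d : ℕ) (V : Type*) [Fintype V] [DecidableEq V] where
  /-- the relations `R_0, …, R_d` -/
  R : Fin (d + 1) → Set (V × V)
  R_nonempty : ∀ i, (R i).Nonempty
  R_zero : R 0 = {p : V × V | p.1 = p.2}
  R_cover : ∀ p : V × V, ∃ i, p ∈ R i
  R_disjoint : ∀ i j, i ≠ j → R i ∩ R j = ∅
  R_symm : ∀ i, ∀ x y : V, (x, y) ∈ R i → (y, x) ∈ R i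
  /-- the intersection numbers `p_{ij}^k` -/
  pnum : Fin (d + 1) → Fin (d + 1) → Fin (d + 1) → ℕ
  pnum_spec : ∀ i j k, ∀ x y : V, (x, y) ∈ R k →
    pnum i j k = {z : V | (x, z) ∈ R i ∧ (z, y) ∈ R j}.ncard
  /-- the adjacency matrices `A_0, …, A_d` -/
  A : Fin (d + 1) → Matrix V V ℂ
  A_of_mem : ∀ i, ∀ x y : V, (x, y) ∈ R i → A i x y = 1
  A_of_not_mem : ∀ i, ∀ x y : V, (x, y) ∉ R i → A i x y = 0
  /-- the primitive idempotents `E_0, …, E_d` -/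
  E : Fin (d + 1) → Matrix V V ℂ
  E_zero : E 0 = (Fintype.card V : ℂ)⁻¹ • Matrix.of (fun _ _ => (1 : ℂ))
  E_sum : ∑ i, E i = (1 : Matrix V V ℂ)
  E_mul : ∀ i j, E i * E j = if i = j then E i else 0
  E_ne_zero : ∀ i, E i ≠ 0
  /-- the first eigenmatrix: `P i j = p_i(j)` -/
  P : Fin (d + 1) → Fin (d + 1) → ℝ
  /-- the second eigenmatrix: `Q i j = q_i(j)`; in particular `θ*_j = Q 1 j` -/
  Q : Fin (d + 1) → Fin (d + 1) → ℝ
  A_eq : ∀ i, A i = ∑ j, (P i j : ℂ) • E j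
  E_eq : ∀ i, E i = (Fintype.card V : ℂ)⁻¹ • ∑ j, (Q i j : ℂ) • A j
  /-- the Krein parameters `q_{ij}^k` -/
  krein : Fin (d + 1) → Fin (d + 1) → Fin (d + 1) → ℝ
  krein_spec : ∀ i j, Matrix.hadamard (E i) (E j) =
    (Fintype.card V : ℂ)⁻¹ • ∑ k, (krein i j k : ℂ) • E k
  krein_nonneg : ∀ i j k, 0 ≤ krein i j k

namespace SymmAssocScheme

variable {d : ℕ} {V : Type*} [Fintype V] [DecidableEq V]

/-- the `h`-fold Hadamard power `E_1^{∘h}` of `E_1`, with `E_1^{∘0} = J`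
the all-ones matrix. -/
noncomputable def hadPowE1 (S : SymmAssocScheme d V) : ℕ → Matrix V V ℂ
  | 0 => Matrix.of fun _ _ => 1
  | n + 1 => Matrix.hadamard (hadPowE1 S n) (S.E 1)

/-- `N h` is the set of indices `j` such that `E_j` is a component of `E_1^{∘h}`
(i.e. `E_j · E_1^{∘h} ≠ 0`) but not a component of `E_1^{∘l}` for any `l < h`. -/
def N (S : SymmAssocScheme d V) (h : ℕ) : Set (Fin (d + 1)) :=
  {j | S.E j * S.hadPowE1 h ≠ 0 ∧ ∀ l < h, S.E j * S.hadPowE1 l = 0}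

/-- `𝔛` is `Q`-polynomial with respect to the ordering `E_{σ 0}, E_{σ 1}, …, E_{σ d}`:
for each `h` there is a polynomial `v*_h` of degree exactly `h` with
`q_{σ h}(j) = v*_h(q_1(j))` for all `j`. -/
def IsQPolyOrdering (S : SymmAssocScheme d V) (σ : Equiv.Perm (Fin (d + 1))) : Prop :=
  ∀ h : Fin (d + 1), ∃ v : Polynomial ℝ, v.degree = (h : ℕ) ∧
    ∀ j, S.Q (σ h) j = v.eval (S.Q 1 j)

/-- `𝔛` is `Q`-polynomial with respect to `E_1`: it is `Q`-polynomial with respect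
to some ordering of the form `E_0, E_1, E_{i_2}, …, E_{i_d}`. -/
def IsQPolyE1 (S : SymmAssocScheme d V) : Prop :=
  ∃ σ : Equiv.Perm (Fin (d + 1)), σ 0 = 0 ∧ σ 1 = 1 ∧ S.IsQPolyOrdering σ

/-- `𝔛` is `P`-polynomial with respect to the ordering `A_{σ 0}, A_{σ 1}, …, A_{σ d}`. -/
def IsPPolyOrdering (S : SymmAssocScheme d V) (σ : Equiv.Perm (Fin (d + 1))) : Prop :=
  ∀ h : Fin (d + 1), ∃ v : Polynomial ℝ, v.degree = (h : ℕ) ∧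
    ∀ j, S.P (σ h) j = v.eval (S.P 1 j)

/-- `𝔛` is `P`-polynomial with respect to `A_1`. -/
def IsPPolyA1 (S : SymmAssocScheme d V) : Prop :=
  ∃ σ : Equiv.Perm (Fin (d + 1)), σ 0 = 0 ∧ σ 1 = 1 ∧ S.IsPPolyOrdering σ

/-- the ratio `K_i = ∏_{j=1, j≠i}^d (θ*_0 − θ*_j)/(θ*_i − θ*_j)`,
where `θ*_j = q_1(j)`. -/
noncomputable def K (S : SymmAssocScheme d V) (i : Fin (d + 1)) : ℝ :=
  ∏ j ∈ Finset.univ.filter (fun j => j ≠ 0 ∧ j ≠ i),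
    (S.Q 1 0 - S.Q 1 j) / (S.Q 1 i - S.Q 1 j)

end SymmAssocScheme

namespace SymmAssocScheme

variable {d : ℕ} {V : Type*} [Fintype V] [DecidableEq V] (S : SymmAssocScheme d V)
include S

lemma nonemptyV : Nonempty V := by
  obtain ⟨⟨x, y⟩, -⟩ := S.R_nonempty 0
  exact ⟨x⟩

lemma cardV_pos : 0 < Fintype.card V := by
  have := S.nonemptyV; exact Fintype.card_pos

lemma rel_unique {p : V × V} {i j : Fin (d + 1)} (hi : p ∈ S.R i) (hj : p ∈ S.R j) : i = j := by
  by_contra hne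
  have := S.R_disjoint i j hne
  exact absurd (Set.mem_inter hi hj) (by rw [this]; exact id)

lemma A_apply_of_mem {i : Fin (d+1)} {x y : V} (hxy : (x, y) ∈ S.R i) {j : Fin (d+1)} :
    S.A j x y = if j = i then 1 else 0 := by
  rcases eq_or_ne j i with rfl | hne
  · simp [S.A_of_mem j x y hxy]
  · simp only [hne, if_false]
    refine S.A_of_not_mem j x y fun hmem => hne (S.rel_unique hmem hxy)

lemma A_indep {c c' : Fin (d + 1) → ℂ} (h : ∑ i, c i • S.A i = ∑ i, c' i • S.A i) : c = c' := by
  funext i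
  obtain ⟨⟨x, y⟩, hxy⟩ := S.R_nonempty i
  have h1 : ∀ c₀ : Fin (d+1) → ℂ, (∑ j, c₀ j • S.A j) x y = c₀ i := by
    intro c₀
    rw [Matrix.sum_apply]
    simp only [Matrix.smul_apply, smul_eq_mul]
    rw [Finset.sum_eq_single i]
    · rw [S.A_of_mem i x y hxy, mul_one]
    · intro j _ hne
      rw [S.A_apply_of_mem hxy, if_neg hne, mul_zero]
    · simp
  have := congrArg (fun M : Matrix V V ℂ => M x y) h
  simpa only [h1] using this

lemma E_indep {c c' : Fin (d + 1) → ℂ} (h : ∑ k, c k • S.E k = ∑ k, c' k • S.E k) : c = c' := by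
  funext j
  have h2 : ∀ c₀ : Fin (d+1) → ℂ, S.E j * (∑ k, c₀ k • S.E k) = c₀ j • S.E j := by
    intro c₀
    rw [Matrix.mul_sum]
    rw [Finset.sum_eq_single j]
    · rw [Matrix.mul_smul, S.E_mul j j, if_pos rfl]
    · intro k _ hne
      rw [Matrix.mul_smul, S.E_mul j k, if_neg (Ne.symm hne), smul_zero]
    · simp
  have h3 : c j • S.E j = c' j • S.E j := by rw [← h2 c, ← h2 c', h]
  have h4 : (c j - c' j) • S.E j = 0 := by rw [sub_smul, h3, sub_self]
  rcases smul_eq_zero.mp h4 with h5 | h5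
  · exact sub_eq_zero.mp h5
  · exact absurd h5 (S.E_ne_zero j)


lemma sum_A : ∑ i, S.A i = Matrix.of (fun _ _ => (1 : ℂ)) := by
  ext x y
  obtain ⟨i, hi⟩ := S.R_cover (x, y)
  rw [Matrix.sum_apply]
  rw [Finset.sum_eq_single i]
  · simp [S.A_of_mem i x y hi]
  · intro j _ hne
    simp [S.A_apply_of_mem hi, hne]
  · simp

lemma E_apply_of_mem (k : Fin (d+1)) {i : Fin (d+1)} {x y : V} (hxy : (x, y) ∈ S.R i) :
    S.E k x y = (Fintype.card V : ℂ)⁻¹ * (S.Q k i : ℂ) := by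
  have := congrArg (fun M : Matrix V V ℂ => M x y) (S.E_eq k)
  simp only [Matrix.smul_apply, Matrix.sum_apply, smul_eq_mul] at this
  rw [this]
  congr 1
  rw [Finset.sum_eq_single i]
  · rw [S.A_of_mem i x y hxy, mul_one]
  · intro j _ hne
    rw [S.A_apply_of_mem hxy, if_neg hne, mul_zero]
  · simp

lemma hadPow_apply_of_mem (h : ℕ) {i : Fin (d+1)} {x y : V} (hxy : (x, y) ∈ S.R i) :
    S.hadPowE1 h x y = ((Fintype.card V : ℂ)⁻¹ * (S.Q 1 i : ℂ)) ^ h := by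
  induction h with
  | zero => simp [hadPowE1]
  | succ n ih =>
    show Matrix.hadamard (S.hadPowE1 n) (S.E 1) x y = _
    rw [Matrix.hadamard_apply, ih, S.E_apply_of_mem 1 hxy, pow_succ]

lemma hadPow_eq_sum_A (h : ℕ) :
    S.hadPowE1 h = ∑ i, (((Fintype.card V : ℂ)⁻¹ * (S.Q 1 i : ℂ)) ^ h) • S.A i := by
  ext x y
  obtain ⟨i, hi⟩ := S.R_cover (x, y)
  rw [S.hadPow_apply_of_mem h hi, Matrix.sum_apply]
  rw [Finset.sum_eq_single i]
  · simp [S.A_of_mem i x y hi]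
  · intro j _ hne
    simp [S.A_apply_of_mem hi, hne]
  · simp

lemma combo_A_to_E (c : Fin (d+1) → ℂ) :
    ∑ i, c i • S.A i = ∑ k, (∑ i, c i * (S.P i k : ℂ)) • S.E k := by
  calc ∑ i, c i • S.A i = ∑ i, ∑ k, (c i * (S.P i k : ℂ)) • S.E k := by
        refine Finset.sum_congr rfl fun i _ => ?_
        rw [S.A_eq i, Finset.smul_sum]
        refine Finset.sum_congr rfl fun k _ => ?_
        rw [smul_smul]
    _ = ∑ k, (∑ i, c i * (S.P i k : ℂ)) • S.E k := by
        rw [Finset.sum_comm]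
        refine Finset.sum_congr rfl fun k _ => ?_
        rw [Finset.sum_smul]

/-- `T h k = ∑_i (θ*_i)^h p_i(k)`, the (rescaled) coefficient of `E_k` in `E_1^{∘h}`. -/
noncomputable def T (h : ℕ) (k : Fin (d+1)) : ℝ := ∑ i, (S.Q 1 i) ^ h * S.P i k

lemma hadPow_eq_sum_E (h : ℕ) :
    S.hadPowE1 h = ∑ k, ((((Fintype.card V : ℝ)⁻¹) ^ h * S.T h k : ℝ) : ℂ) • S.E k := by
  rw [S.hadPow_eq_sum_A h, S.combo_A_to_E]
  refine Finset.sum_congr rfl fun k _ => ?_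
  congr 1
  rw [T]
  push_cast
  rw [Finset.mul_sum]
  refine Finset.sum_congr rfl fun i _ => ?_
  ring


omit [Fintype V] [DecidableEq V] S in
lemma hadamard_sum_left {ι : Type*} (s : Finset ι) (M : ι → Matrix V V ℂ) (N : Matrix V V ℂ) :
    Matrix.hadamard (∑ i ∈ s, M i) N = ∑ i ∈ s, Matrix.hadamard (M i) N := by
  ext x y
  simp [Matrix.hadamard_apply, Matrix.sum_apply, Finset.sum_mul]

omit [DecidableEq V] S in
lemma cast_inv_card : ((((Fintype.card V : ℝ)⁻¹ : ℝ)) : ℂ) = (Fintype.card V : ℂ)⁻¹ := by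
  push_cast
  ring

lemma T_rec (h : ℕ) (k : Fin (d+1)) : S.T (h+1) k = ∑ m, S.T h m * S.krein m 1 k := by
  have hν0 : (Fintype.card V : ℝ)⁻¹ ≠ 0 := inv_ne_zero (by exact_mod_cast S.cardV_pos.ne')
  have e2 : S.hadPowE1 (h+1)
      = ∑ k', (((Fintype.card V : ℝ)⁻¹ ^ (h+1) * (∑ m, S.T h m * S.krein m 1 k') : ℝ) : ℂ) • S.E k' := by
    show Matrix.hadamard (S.hadPowE1 h) (S.E 1) = _
    rw [S.hadPow_eq_sum_E h, hadamard_sum_left]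
    have step : ∀ m : Fin (d+1),
        Matrix.hadamard ((((Fintype.card V : ℝ)⁻¹ ^ h * S.T h m : ℝ) : ℂ) • S.E m) (S.E 1)
          = ∑ k', (((Fintype.card V : ℝ)⁻¹ ^ (h+1) * (S.T h m * S.krein m 1 k') : ℝ) : ℂ) • S.E k' := by
      intro m
      rw [Matrix.smul_hadamard, S.krein_spec m 1, ← cast_inv_card, smul_smul, Finset.smul_sum]
      refine Finset.sum_congr rfl fun k' _ => ?_
      rw [smul_smul]
      norm_cast
      ring_nf
    rw [Finset.sum_congr rfl fun m _ => step m, Finset.sum_comm]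
    refine Finset.sum_congr rfl fun k' _ => ?_
    rw [← Finset.sum_smul]
    norm_cast
    rw [Finset.mul_sum]
  have e3 := S.hadPow_eq_sum_E (h+1)
  have e4 := S.E_indep (e3.symm.trans e2)
  have e5 : (((Fintype.card V : ℝ)⁻¹ ^ (h+1) * S.T (h+1) k : ℝ) : ℂ)
      = (((Fintype.card V : ℝ)⁻¹ ^ (h+1) * (∑ m, S.T h m * S.krein m 1 k) : ℝ) : ℂ) := congrFun e4 k
  have e6 := Complex.ofReal_inj.mp e5
  exact mul_left_cancel₀ (pow_ne_zero _ hν0) e6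

lemma T_zero (k : Fin (d+1)) : S.T 0 k = if k = 0 then (Fintype.card V : ℝ) else 0 := by
  have e1 : ∑ i, (1 : ℂ) • S.A i = ∑ k', ((if k' = 0 then (Fintype.card V : ℝ) else 0 : ℝ) : ℂ) • S.E k' := by
    simp only [one_smul]
    rw [S.sum_A]
    have : Matrix.of (fun _ _ => (1 : ℂ)) = (Fintype.card V : ℂ) • S.E 0 := by
      rw [S.E_zero, smul_smul, mul_inv_cancel₀ (by exact_mod_cast S.cardV_pos.ne'), one_smul]
    rw [this, Finset.sum_eq_single 0]
    · simp
    · intro k' _ hne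
      simp [hne]
    · simp
  rw [S.combo_A_to_E] at e1
  have e2 := S.E_indep e1
  have e3 := congrFun e2 k
  simp only [one_mul] at e3
  have : ((S.T 0 k : ℝ) : ℂ) = ((if k = 0 then (Fintype.card V : ℝ) else 0 : ℝ) : ℂ) := by
    rw [← e3, T]
    push_cast
    simp
  exact Complex.ofReal_inj.mp this

lemma P_zero (k : Fin (d+1)) : S.P 0 k = 1 := by
  have hA0 : S.A 0 = ∑ k', (1 : ℂ) • S.E k' := by
    simp only [one_smul, S.E_sum]
    ext x y
    rcases eq_or_ne x y with rfl | hne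
    · rw [S.A_of_mem 0 x x (by rw [S.R_zero]; exact rfl)]
      simp [Matrix.one_apply]
    · rw [S.A_of_not_mem 0 x y (by rw [S.R_zero]; exact hne)]
      simp [Matrix.one_apply, hne]
  have := S.E_indep ((S.A_eq 0).symm.trans hA0)
  have := congrFun this k
  exact_mod_cast this

lemma T_one (k : Fin (d+1)) : S.T 1 k = if k = 1 then (Fintype.card V : ℝ) else 0 := by
  have e0 : S.E 1 = ∑ i, (((Fintype.card V : ℂ))⁻¹ * (S.Q 1 i : ℂ)) • S.A i := by
    rw [S.E_eq 1, Finset.smul_sum]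
    refine Finset.sum_congr rfl fun i _ => ?_
    rw [smul_smul]
  have e1 : ∑ k', ((if k' = 1 then (1:ℝ) else 0 : ℝ) : ℂ) • S.E k'
      = ∑ k', (∑ i, ((Fintype.card V : ℂ))⁻¹ * (S.Q 1 i : ℂ) * (S.P i k' : ℂ)) • S.E k' := by
    rw [← S.combo_A_to_E, ← e0, Finset.sum_eq_single 1]
    · simp
    · intro k' _ hne
      simp [hne]
    · simp
  have e2 := S.E_indep e1
  have e3 := congrFun e2 k
  have e4 : ((if k = 1 then (1:ℝ) else 0 : ℝ) : ℂ)
      = ((Fintype.card V : ℂ))⁻¹ * ((S.T 1 k : ℝ) : ℂ) := by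
    rw [e3, T]
    push_cast
    rw [Finset.mul_sum]
    refine Finset.sum_congr rfl fun i _ => ?_
    ring
  rw [← cast_inv_card] at e4
  rw [← Complex.ofReal_mul] at e4
  have e5 := Complex.ofReal_inj.mp e4
  have hc : (Fintype.card V : ℝ) ≠ 0 := by exact_mod_cast S.cardV_pos.ne'
  rcases eq_or_ne k 1 with rfl | hne
  · simp only [if_pos rfl] at e5 ⊢
    field_simp at e5; simp only [if_true, one_mul] at e5 ⊢
    linarith [e5]
  · simp only [if_neg hne] at e5 ⊢
    have := e5.symm
    rcases mul_eq_zero.mp this with h' | h'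
    · exact absurd h' (inv_ne_zero hc)
    · exact h'

lemma T_nonneg (h : ℕ) (k : Fin (d+1)) : 0 ≤ S.T h k := by
  induction h generalizing k with
  | zero =>
    rw [S.T_zero]
    split
    · exact le_of_lt (by exact_mod_cast S.cardV_pos)
    · exact le_rfl
  | succ n ih =>
    rw [S.T_rec]
    exact Finset.sum_nonneg fun m _ => mul_nonneg (ih m) (S.krein_nonneg m 1 k)


lemma theta_pow (h : ℕ) (i : Fin (d+1)) :
    (S.Q 1 i) ^ h = (Fintype.card V : ℝ)⁻¹ * ∑ k, S.T h k * S.Q k i := by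
  have hc : (Fintype.card V : ℝ) ≠ 0 := by exact_mod_cast S.cardV_pos.ne'
  have hν0 : (Fintype.card V : ℝ)⁻¹ ≠ 0 := inv_ne_zero hc
  have eE : ∑ k, (((Fintype.card V : ℝ)⁻¹ ^ h * S.T h k : ℝ) : ℂ) • S.E k
      = ∑ i', ((((Fintype.card V : ℝ)⁻¹ ^ (h+1) * ∑ k, S.T h k * S.Q k i') : ℝ) : ℂ) • S.A i' := by
    calc ∑ k, (((Fintype.card V : ℝ)⁻¹ ^ h * S.T h k : ℝ) : ℂ) • S.E k
        = ∑ k, ∑ i', ((((Fintype.card V : ℝ)⁻¹ ^ (h+1) * (S.T h k * S.Q k i')) : ℝ) : ℂ) • S.A i' := by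
          refine Finset.sum_congr rfl fun k _ => ?_
          rw [S.E_eq k, ← cast_inv_card, Finset.smul_sum, Finset.smul_sum]
          refine Finset.sum_congr rfl fun i' _ => ?_
          rw [smul_smul, smul_smul]
          norm_cast
          ring_nf
      _ = _ := by
          rw [Finset.sum_comm]
          refine Finset.sum_congr rfl fun i' _ => ?_
          rw [← Finset.sum_smul]
          norm_cast
          rw [Finset.mul_sum]
  have eA : ∑ i', (((Fintype.card V : ℂ)⁻¹ * (S.Q 1 i' : ℂ)) ^ h) • S.A i'
      = ∑ i', ((((Fintype.card V : ℝ)⁻¹ ^ (h+1) * ∑ k, S.T h k * S.Q k i') : ℝ) : ℂ) • S.A i' :=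
    (S.hadPow_eq_sum_A h).symm.trans ((S.hadPow_eq_sum_E h).trans eE)
  have e1 := congrFun (S.A_indep eA) i
  have e2 : ((((Fintype.card V : ℝ)⁻¹ * S.Q 1 i) ^ h : ℝ) : ℂ)
      = ((((Fintype.card V : ℝ)⁻¹ ^ (h+1) * ∑ k, S.T h k * S.Q k i) : ℝ) : ℂ) := by
    rw [← e1]
    push_cast
    ring
  have e3 := Complex.ofReal_inj.mp e2
  rw [mul_pow] at e3
  have e4 : (Fintype.card V : ℝ)⁻¹ ^ h * S.Q 1 i ^ h
      = (Fintype.card V : ℝ)⁻¹ ^ h * ((Fintype.card V : ℝ)⁻¹ * ∑ k, S.T h k * S.Q k i) := by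
    rw [e3, pow_succ]
    ring
  exact mul_left_cancel₀ (pow_ne_zero _ hν0) e4

/-- the moment functional `μ_k(v) = ∑_i v(θ*_i) p_i(k)`. -/
noncomputable def mu (k : Fin (d+1)) (v : Polynomial ℝ) : ℝ :=
  ∑ i, v.eval (S.Q 1 i) * S.P i k

lemma mu_pow (h : ℕ) (k : Fin (d+1)) : S.mu k (Polynomial.X ^ h) = S.T h k := by
  simp [mu, T]

lemma mu_eq_sum_coeff (k : Fin (d+1)) (v : Polynomial ℝ) :
    S.mu k v = ∑ m ∈ Finset.range (v.natDegree + 1), v.coeff m * S.T m k := by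
  rw [mu]
  have : ∀ i : Fin (d+1), v.eval (S.Q 1 i)
      = ∑ m ∈ Finset.range (v.natDegree + 1), v.coeff m * (S.Q 1 i) ^ m := fun i =>
    Polynomial.eval_eq_sum_range (p := v) (S.Q 1 i)
  simp only [this, Finset.sum_mul]
  rw [Finset.sum_comm]
  refine Finset.sum_congr rfl fun m _ => ?_
  rw [T, Finset.mul_sum]
  refine Finset.sum_congr rfl fun i _ => ?_
  ring

lemma mu_interpolate (k : Fin (d+1)) (s : Finset (Fin (d+1))) (r : Fin (d+1) → ℝ) :
    S.mu k (Lagrange.interpolate s (fun j => S.Q 1 j) r)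
      = ∑ j ∈ s, r j * S.mu k (Lagrange.basis s (fun j => S.Q 1 j) j) := by
  rw [Lagrange.interpolate_apply, mu]
  simp only [Polynomial.eval_finset_sum, Polynomial.eval_mul, Polynomial.eval_C, Finset.sum_mul]
  rw [Finset.sum_comm]
  refine Finset.sum_congr rfl fun j _ => ?_
  rw [mu, Finset.mul_sum]
  refine Finset.sum_congr rfl fun i _ => ?_
  ring


lemma mu_basis_eq_zero (hθ : Function.Injective fun j : Fin (d + 1) => S.Q 1 j)
    {l : Fin (d+1)}
    (hK : ∀ i : Fin (d + 1), i ≠ 0 →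
      (∏ j ∈ Finset.univ.filter (fun j => j ≠ 0 ∧ j ≠ i),
        (S.Q 1 0 - S.Q 1 j) / (S.Q 1 i - S.Q 1 j)) = -S.P i l)
    {j : Fin (d+1)} (hj : j ∈ Finset.univ.filter (fun j : Fin (d+1) => j ≠ 0)) :
    S.mu l (Lagrange.basis (Finset.univ.filter (fun j : Fin (d+1) => j ≠ 0))
      (fun j => S.Q 1 j) j) = 0 := by
  set s0 : Finset (Fin (d+1)) := Finset.univ.filter (fun j : Fin (d+1) => j ≠ 0) with hs0
  have hj0 : j ≠ 0 := (Finset.mem_filter.mp hj).2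
  have h0s : (0 : Fin (d+1)) ∉ s0 := by simp [hs0]
  have hinj : Set.InjOn (fun j : Fin (d+1) => S.Q 1 j) ↑s0 := hθ.injOn
  have hb0 : (Lagrange.basis s0 (fun j => S.Q 1 j) j).eval (S.Q 1 0)
      = ∏ k ∈ s0.erase j, (S.Q 1 0 - S.Q 1 k) / (S.Q 1 j - S.Q 1 k) := by
    rw [Lagrange.basis, Polynomial.eval_prod]
    refine Finset.prod_congr rfl fun k _ => ?_
    rw [Lagrange.basisDivisor]
    simp only [Polynomial.eval_mul, Polynomial.eval_C, Polynomial.eval_sub, Polynomial.eval_X]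
    rw [div_eq_mul_inv, mul_comm]
  have hset : s0.erase j = Finset.univ.filter (fun k : Fin (d+1) => k ≠ 0 ∧ k ≠ j) := by
    ext k
    simp only [Finset.mem_erase, Finset.mem_filter, Finset.mem_univ, true_and, hs0]
    tauto
  have hval : (Lagrange.basis s0 (fun j => S.Q 1 j) j).eval (S.Q 1 0) = -S.P j l := by
    rw [hb0, hset, hK j hj0]
  have hsplit : (Finset.univ : Finset (Fin (d+1))) = insert 0 s0 := by
    ext k
    simp only [Finset.mem_univ, Finset.mem_insert, true_iff, hs0, Finset.mem_filter]
    rcases eq_or_ne k 0 with rfl | hk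
    · exact Or.inl rfl
    · exact Or.inr ⟨trivial, hk⟩
  rw [mu, hsplit, Finset.sum_insert h0s]
  have hrest : ∑ i ∈ s0, (Lagrange.basis s0 (fun j => S.Q 1 j) j).eval (S.Q 1 i) * S.P i l
      = S.P j l := by
    rw [Finset.sum_eq_single_of_mem j hj]
    · rw [Lagrange.eval_basis_self hinj hj, one_mul]
    · intro i hi hne
      rw [Lagrange.eval_basis_of_ne (Ne.symm hne) hi, zero_mul]
  rw [hrest, hval, S.P_zero]
  ring

lemma T_eq_zero_of_lt (hθ : Function.Injective fun j : Fin (d + 1) => S.Q 1 j)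
    {l : Fin (d+1)}
    (hK : ∀ i : Fin (d + 1), i ≠ 0 →
      (∏ j ∈ Finset.univ.filter (fun j => j ≠ 0 ∧ j ≠ i),
        (S.Q 1 0 - S.Q 1 j) / (S.Q 1 i - S.Q 1 j)) = -S.P i l)
    {h : ℕ} (hhd : h < d) : S.T h l = 0 := by
  set s0 : Finset (Fin (d+1)) := Finset.univ.filter (fun j : Fin (d+1) => j ≠ 0) with hs0
  have hcard : s0.card = d := by
    rw [hs0, Finset.filter_ne', Finset.card_erase_of_mem (Finset.mem_univ 0)]
    simp
  have hinj : Set.InjOn (fun j : Fin (d+1) => S.Q 1 j) ↑s0 := hθ.injOn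
  have hdeg : (Polynomial.X ^ h : Polynomial ℝ).degree < s0.card := by
    rw [Polynomial.degree_X_pow, hcard]
    exact_mod_cast hhd
  have hinterp := Lagrange.eq_interpolate (v := fun j : Fin (d+1) => S.Q 1 j) hinj hdeg
  rw [← S.mu_pow h l, hinterp, S.mu_interpolate]
  refine Finset.sum_eq_zero fun j hj => ?_
  rw [S.mu_basis_eq_zero hθ hK hj, mul_zero]

lemma exists_T_ne_zero (hθ : Function.Injective fun j : Fin (d + 1) => S.Q 1 j)
    (k : Fin (d+1)) : ∃ h : ℕ, h ≤ d ∧ S.T h k ≠ 0 := by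
  by_contra hcon
  push_neg at hcon
  have hinj : Set.InjOn (fun j : Fin (d+1) => S.Q 1 j) ↑(Finset.univ : Finset (Fin (d+1))) :=
    hθ.injOn
  set ℓ : Polynomial ℝ := Lagrange.basis Finset.univ (fun j : Fin (d+1) => S.Q 1 j) 0 with hℓ
  have hdeg : ℓ.degree = (d : WithBot ℕ) := by
    rw [hℓ, Lagrange.degree_basis hinj (Finset.mem_univ 0)]
    norm_num
  have hnd : ℓ.natDegree = d := Polynomial.natDegree_eq_of_degree_eq_some hdeg
  have h1 : S.mu k ℓ = 1 := by
    rw [mu, Finset.sum_eq_single_of_mem 0 (Finset.mem_univ 0)]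
    · rw [hℓ, Lagrange.eval_basis_self hinj (Finset.mem_univ 0), one_mul, S.P_zero]
    · intro i _ hne
      rw [hℓ, Lagrange.eval_basis_of_ne (Ne.symm hne) (Finset.mem_univ i), zero_mul]
  have h0 : S.mu k ℓ = 0 := by
    rw [S.mu_eq_sum_coeff, hnd]
    refine Finset.sum_eq_zero fun m hm => ?_
    rw [hcon m (by simpa using Nat.lt_succ_iff.mp (Finset.mem_range.mp hm)), mul_zero]
  rw [h1] at h0
  exact one_ne_zero h0

end SymmAssocScheme

/-- If `𝔛` is a symmetric association scheme of class `d ≥ 2` with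
`θ*_0, …, θ*_d` mutually distinct and there exists `l ∈ {2, …, d}` such that
`∏_{j=1,j≠i}^d (θ*_0 − θ*_j)/(θ*_i − θ*_j) = −p_i(l)` for every `i ∈ {1, …, d}`,
then `𝔛` is `Q`-polynomial with respect to `E_1`. -/
theorem statement2 {d : ℕ} {V : Type*} [Fintype V] [DecidableEq V]
    (S : SymmAssocScheme d V) (hd : 2 ≤ d)
    (hθ : Function.Injective fun j : Fin (d + 1) => S.Q 1 j)
    (h : ∃ l : Fin (d + 1), 2 ≤ (l : ℕ) ∧
      ∀ i : Fin (d + 1), i ≠ 0 →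
        (∏ j ∈ Finset.univ.filter (fun j => j ≠ 0 ∧ j ≠ i),
          (S.Q 1 0 - S.Q 1 j) / (S.Q 1 i - S.Q 1 j)) = -S.P i l) :
    S.IsQPolyE1 := by
  classical
  obtain ⟨l, hl2, hK⟩ := h
  have hc : (Fintype.card V : ℝ) ≠ 0 := by exact_mod_cast S.cardV_pos.ne'
  have hν0 : (Fintype.card V : ℝ)⁻¹ ≠ 0 := inv_ne_zero hc
  have hex : ∀ k : Fin (d+1), ∃ h : ℕ, h ≤ d ∧ S.T h k ≠ 0 := S.exists_T_ne_zero hθ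
  set nn : Fin (d+1) → ℕ := fun k => Nat.find (hex k) with hnn
  have nn_le : ∀ k, nn k ≤ d := fun k => (Nat.find_spec (hex k)).1
  have nn_ne : ∀ k, S.T (nn k) k ≠ 0 := fun k => (Nat.find_spec (hex k)).2
  have nn_min : ∀ k, ∀ m, m < nn k → S.T m k = 0 := by
    intro k m hm
    have h1 := Nat.find_min (hex k) hm
    push_neg at h1
    exact h1 (le_trans hm.le (nn_le k))
  have nn_pos : ∀ k, 0 < S.T (nn k) k :=
    fun k => lt_of_le_of_ne (S.T_nonneg _ _) (Ne.symm (nn_ne k))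
  have h10 : (1 : Fin (d+1)) ≠ 0 := by
    intro hcontra
    have h2 := congrArg Fin.val hcontra
    rw [Fin.val_one', Nat.mod_eq_of_lt (by omega)] at h2
    simp at h2
  have nn_zero : nn 0 = 0 := by
    rw [hnn]
    rw [Nat.find_eq_zero]
    refine ⟨Nat.zero_le d, ?_⟩
    rw [S.T_zero, if_pos rfl]
    exact hc
  have nn_one : nn 1 = 1 := by
    have hle : nn 1 ≤ 1 := by
      refine Nat.find_min' (hex 1) ⟨by omega, ?_⟩
      rw [S.T_one, if_pos rfl]
      exact hc
    have hne0 : nn 1 ≠ 0 := by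
      intro h0
      have := nn_ne 1
      rw [h0, S.T_zero, if_neg h10] at this
      exact this rfl
    omega
  have nn_l : nn l = d := by
    rcases lt_or_eq_of_le (nn_le l) with hlt | heq
    · exact absurd (S.T_eq_zero_of_lt hθ hK hlt) (nn_ne l)
    · exact heq
  -- step-down
  have step_down : ∀ (k : Fin (d+1)) (h : ℕ), nn k = h + 1 → ∃ m, nn m = h := by
    intro k h hk
    have h1 : S.T (h+1) k ≠ 0 := hk ▸ nn_ne k
    rw [S.T_rec] at h1
    have h2 : ∃ m, S.T h m * S.krein m 1 k ≠ 0 := by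
      by_contra hcon
      push_neg at hcon
      exact h1 (Finset.sum_eq_zero fun m _ => hcon m)
    obtain ⟨m, hm⟩ := h2
    have hTm : S.T h m ≠ 0 := fun h0 => hm (by rw [h0, zero_mul])
    have hkr : 0 < S.krein m 1 k :=
      lt_of_le_of_ne (S.krein_nonneg m 1 k) (Ne.symm fun h0 => hm (by rw [h0, mul_zero]))
    have hd1 : h + 1 ≤ d := hk ▸ nn_le k
    have hmle : nn m ≤ h := Nat.find_min' (hex m) ⟨by omega, hTm⟩
    refine ⟨m, ?_⟩
    rcases lt_or_eq_of_le hmle with hlt | heq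
    · exfalso
      set h' := nn m with hh'
      have hpos : 0 < S.T (h'+1) k := by
        rw [S.T_rec]
        refine Finset.sum_pos' (fun m' _ => mul_nonneg (S.T_nonneg _ _) (S.krein_nonneg _ _ _)) ?_
        exact ⟨m, Finset.mem_univ m, mul_pos (nn_pos m) hkr⟩
      have : nn k ≤ h' + 1 := Nat.find_min' (hex k) ⟨by omega, hpos.ne'⟩
      omega
    · exact heq
  have down : ∀ h : ℕ, (∃ k, nn k = h) → ∀ h' ≤ h, ∃ k, nn k = h' := by
    intro h
    induction h with
    | zero =>
      intro hk h' hh'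
      rw [Nat.le_zero.mp hh']
      exact hk
    | succ n ihn =>
      intro hk h' hh'
      rcases Nat.lt_succ_iff_lt_or_eq.mp (Nat.lt_succ_of_le hh') with hlt | heq
      · obtain ⟨k, hkk⟩ := hk
        obtain ⟨m, hm⟩ := step_down k n hkk
        exact ihn ⟨m, hm⟩ h' (by omega)
      · exact heq ▸ hk
  have surj : ∀ h : ℕ, h ≤ d → ∃ k, nn k = h := fun h hh => down d ⟨l, nn_l⟩ h hh
  set F : Fin (d+1) → Fin (d+1) := fun k => ⟨nn k, Nat.lt_succ_of_le (nn_le k)⟩ with hF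
  have Fsurj : Function.Surjective F := by
    intro t
    obtain ⟨k, hk⟩ := surj t.val (Nat.lt_succ_iff.mp t.isLt)
    exact ⟨k, Fin.ext (by simp [hF, hk])⟩
  have Fbij : Function.Bijective F :=
    (Fintype.bijective_iff_surjective_and_card F).mpr ⟨Fsurj, rfl⟩
  set e : Equiv.Perm (Fin (d+1)) := Equiv.ofBijective F Fbij with he
  have he_app : ∀ k, e k = F k := fun k => rfl
  have nn_sig : ∀ t : Fin (d+1), nn (e.symm t) = t.val := by
    intro t
    have h1 : F (e.symm t) = t := by rw [← he_app]; exact e.apply_symm_apply t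
    exact congrArg Fin.val h1
  have nn_inj : ∀ x k : Fin (d+1), nn x = nn k → x = k := by
    intro x k hxk
    exact Fbij.1 (Fin.ext (by simp [hF, hxk]))
  -- main induction
  have main : ∀ n : ℕ, ∀ k : Fin (d+1), nn k = n →
      ∃ v : Polynomial ℝ, v.degree = (n : ℕ) ∧ ∀ j, S.Q k j = v.eval (S.Q 1 j) := by
    intro n
    induction n using Nat.strong_induction_on with
    | _ n ih =>
      intro k hk
      set B : Finset (Fin (d+1)) := Finset.univ.filter (fun k' => nn k' < n) with hB
      have hmemB : ∀ x : Fin (d+1), x ∈ B ↔ nn x < n := fun x => by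
        rw [hB, Finset.mem_filter]
        simp
      have hkB : k ∉ B := fun hmem => absurd ((hmemB k).mp hmem) (by rw [hk]; exact lt_irrefl n)
      have hch : ∀ k' : {x // x ∈ B}, ∃ v : Polynomial ℝ,
          v.degree = ((nn k'.1 : ℕ) : WithBot ℕ) ∧ ∀ j, S.Q k'.1 j = v.eval (S.Q 1 j) := by
        rintro ⟨k', hk'⟩
        have hlt : nn k' < n := (hmemB k').mp hk'
        exact ih (nn k') hlt k' rfl
      choose f hfdeg hfeval using hch
      set u : Polynomial ℝ := ∑ k' ∈ B.attach,
        Polynomial.C ((Fintype.card V : ℝ)⁻¹ * S.T n k'.1) * f k' with hu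
      set c : ℝ := (Fintype.card V : ℝ)⁻¹ * S.T n k with hcdef
      have hcne : c ≠ 0 := mul_ne_zero hν0 (hk ▸ nn_ne k)
      have hudeg : u.degree < ((n : ℕ) : WithBot ℕ) := by
        rw [hu]
        refine lt_of_le_of_lt (Polynomial.degree_sum_le _ _) ?_
        rw [Finset.sup_lt_iff (by exact WithBot.bot_lt_coe n)]
        intro k' _
        calc (Polynomial.C ((Fintype.card V : ℝ)⁻¹ * S.T n k'.1) * f k').degree
            ≤ 0 + (f k').degree :=
              Polynomial.degree_mul_le_of_le Polynomial.degree_C_le le_rfl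
          _ = (f k').degree := by rw [zero_add]
          _ < ((n : ℕ) : WithBot ℕ) := by
              rw [hfdeg k']
              exact_mod_cast (hmemB k'.1).mp k'.2
      have hXu : (Polynomial.X ^ n - u).degree = ((n : ℕ) : WithBot ℕ) := by
        rw [Polynomial.degree_sub_eq_left_of_degree_lt
          (by rw [Polynomial.degree_X_pow]; exact hudeg)]
        exact Polynomial.degree_X_pow n
      refine ⟨Polynomial.C c⁻¹ * (Polynomial.X ^ n - u), ?_, ?_⟩
      · rw [Polynomial.degree_C_mul (inv_ne_zero hcne), hXu]
      · intro j
        have hstar := S.theta_pow n j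
        have hsum2 : ∑ k' ∈ insert k B, S.T n k' * S.Q k' j
            = ∑ k', S.T n k' * S.Q k' j := by
          refine Finset.sum_subset (Finset.subset_univ _) ?_
          intro x _ hx
          have hxk : x ≠ k ∧ x ∉ B := by
            constructor
            · intro hxe; exact hx (by rw [hxe]; exact Finset.mem_insert_self k B)
            · intro hxB; exact hx (Finset.mem_insert_of_mem hxB)
          have hge : n ≤ nn x := not_lt.mp (fun hlt => hxk.2 ((hmemB x).mpr hlt))
          have hgt : n < nn x := by
            rcases lt_or_eq_of_le hge with hlt | heq
            · exact hlt
            · exact absurd (nn_inj x k (by rw [← heq, hk])) hxk.1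
          rw [nn_min x n hgt, zero_mul]
        have hattach : ∑ k' ∈ B, S.T n k' * S.Q k' j
            = ∑ k' ∈ B.attach, S.T n k'.1 * S.Q k'.1 j := (Finset.sum_attach B _).symm
        have hu_eval : u.eval (S.Q 1 j)
            = (Fintype.card V : ℝ)⁻¹ * ∑ k' ∈ B.attach, S.T n k'.1 * S.Q k'.1 j := by
          rw [hu, Polynomial.eval_finset_sum, Finset.mul_sum]
          refine Finset.sum_congr rfl fun k' _ => ?_
          rw [Polynomial.eval_mul, Polynomial.eval_C, ← hfeval k' j]
          ring
        rw [Polynomial.eval_mul, Polynomial.eval_C, Polynomial.eval_sub, Polynomial.eval_pow,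
          Polynomial.eval_X, hu_eval, hstar, ← hsum2, Finset.sum_insert hkB, hattach]
        have hT : S.T n k ≠ 0 := hk ▸ nn_ne k
        rw [hcdef]
        field_simp
        ring
  refine ⟨e.symm, ?_, ?_, ?_⟩
  · rw [Equiv.symm_apply_eq, he_app, hF]
    exact (Fin.ext (by simp [nn_zero])).symm
  · rw [Equiv.symm_apply_eq, he_app, hF]
    refine (Fin.ext ?_).symm
    simp only [nn_one]
    rw [Fin.val_one', Nat.mod_eq_of_lt (by omega)]
  · intro t
    exact main t.val (e.symm t) (nn_sig t)
end

section
/- Let 𝔛 be a symmetric association scheme of class d ≥ 2, let i ∈ {1, 2, …, d−1}, and set ℐ = N_0 ∪ N_1 ∪ ⋯ ∪ N_{i−1}. If N_i is empty, then the Krein parameters satisfy q_{1,j}^k = 0 for every j ∈ ℐ and every k ∉ ℐ. -/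
open Matrix BigOperators Finset

namespace SymmAssocScheme

variable {d : ℕ} {V : Type*} [Fintype V] [DecidableEq V]

noncomputable def coeff (S : SymmAssocScheme d V) : ℕ → Fin (d + 1) → ℝ
  | 0 => fun m => if m = 0 then (Fintype.card V : ℝ) else 0
  | l + 1 => fun k => (Fintype.card V : ℝ)⁻¹ * ∑ m, S.coeff l m * S.krein 1 m k

lemma card_pos' (S : SymmAssocScheme d V) : 0 < Fintype.card V := by
  rw [Fintype.card_pos_iff]
  by_contra h
  rw [not_nonempty_iff] at h
  exact S.E_ne_zero 0 (Subsingleton.elim _ _)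

lemma coeff_nonneg (S : SymmAssocScheme d V) : ∀ l m, 0 ≤ S.coeff l m
  | 0, m => by unfold coeff; split <;> positivity
  | l + 1, k => by
    unfold coeff
    have h1 : (0:ℝ) ≤ ∑ m, S.coeff l m * S.krein 1 m k :=
      Finset.sum_nonneg fun m _ => mul_nonneg (S.coeff_nonneg l m) (S.krein_nonneg 1 m k)
    positivity

lemma sum_hadamard' {n : ℕ} (f : Fin n → Matrix V V ℂ) (B : Matrix V V ℂ) :
    Matrix.hadamard (∑ m, f m) B = ∑ m, Matrix.hadamard (f m) B := by
  ext x y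
  simp [Matrix.hadamard, Matrix.sum_apply, Finset.sum_mul]

lemma hadPow_eq (S : SymmAssocScheme d V) (l : ℕ) :
    S.hadPowE1 l = ∑ m, ((S.coeff l m : ℝ) : ℂ) • S.E m := by
  have hc : (Fintype.card V : ℂ) ≠ 0 := Nat.cast_ne_zero.mpr S.card_pos'.ne'
  induction l with
  | zero =>
    have : ∑ m, ((S.coeff 0 m : ℝ) : ℂ) • S.E m = (Fintype.card V : ℂ) • S.E 0 := by
      rw [show (fun m => ((S.coeff 0 m : ℝ) : ℂ) • S.E m) =
          (fun m => if m = 0 then (Fintype.card V : ℂ) • S.E 0 else 0) from ?_]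
      · simp
      · funext m
        by_cases hm : m = 0 <;> simp [coeff, hm]
    rw [this, hadPowE1, S.E_zero, smul_smul, mul_inv_cancel₀ hc, one_smul]
  | succ l ih =>
    show Matrix.hadamard (S.hadPowE1 l) (S.E 1) = _
    rw [ih, sum_hadamard']
    have step : ∀ m, Matrix.hadamard (((S.coeff l m : ℝ) : ℂ) • S.E m) (S.E 1) =
        ∑ k, (((S.coeff l m : ℝ) : ℂ) * (Fintype.card V : ℂ)⁻¹ * (S.krein 1 m k : ℂ)) • S.E k := by
      intro m
      rw [Matrix.smul_hadamard, Matrix.hadamard_comm, S.krein_spec 1 m, Finset.smul_sum,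
        Finset.smul_sum]
      refine Finset.sum_congr rfl fun k _ => ?_
      rw [smul_smul, smul_smul]
    calc ∑ m, Matrix.hadamard (((S.coeff l m : ℝ) : ℂ) • S.E m) (S.E 1)
        = ∑ m, ∑ k, (((S.coeff l m : ℝ) : ℂ) * (Fintype.card V : ℂ)⁻¹ * (S.krein 1 m k : ℂ)) • S.E k := by
          exact Finset.sum_congr rfl fun m _ => step m
      _ = ∑ k, ∑ m, (((S.coeff l m : ℝ) : ℂ) * (Fintype.card V : ℂ)⁻¹ * (S.krein 1 m k : ℂ)) • S.E k :=
          Finset.sum_comm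
      _ = ∑ k, ((S.coeff (l + 1) k : ℝ) : ℂ) • S.E k := by
          refine Finset.sum_congr rfl fun k _ => ?_
          rw [← Finset.sum_smul]
          congr 1
          show _ = ((((Fintype.card V : ℝ)⁻¹ * ∑ m, S.coeff l m * S.krein 1 m k : ℝ)) : ℂ)
          push_cast
          rw [Finset.mul_sum]
          refine Finset.sum_congr rfl fun m _ => by ring

lemma E_mul_hadPow (S : SymmAssocScheme d V) (l : ℕ) (k : Fin (d + 1)) :
    S.E k * S.hadPowE1 l = ((S.coeff l k : ℝ) : ℂ) • S.E k := by
  rw [hadPow_eq, Finset.mul_sum]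
  rw [show (fun m => S.E k * (((S.coeff l m : ℝ) : ℂ) • S.E m)) =
      (fun m => if m = k then ((S.coeff l k : ℝ) : ℂ) • S.E k else 0) from ?_]
  · simp
  · funext m
    rw [Matrix.mul_smul, S.E_mul]
    by_cases hm : m = k
    · subst hm; simp
    · rw [if_neg (Ne.symm hm), smul_zero, if_neg hm]

lemma E_mul_hadPow_ne_zero_iff (S : SymmAssocScheme d V) (l : ℕ) (k : Fin (d + 1)) :
    S.E k * S.hadPowE1 l ≠ 0 ↔ S.coeff l k ≠ 0 := by
  rw [E_mul_hadPow]
  constructor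
  · intro h hc
    simp [hc] at h
  · intro hc h
    rcases smul_eq_zero.mp h with h1 | h2
    · exact hc (by exact_mod_cast h1)
    · exact S.E_ne_zero k h2

end SymmAssocScheme

/-- For a symmetric association scheme of class `d ≥ 2`,
`i ∈ {1, …, d−1}` and `ℐ = N_0 ∪ ⋯ ∪ N_{i−1}`: if `N_i` is empty, then the Krein
parameters satisfy `q_{1,j}^k = 0` for every `j ∈ ℐ` and every `k ∉ ℐ`. -/
theorem statement6 {d : ℕ} {V : Type*} [Fintype V] [DecidableEq V]
    (S : SymmAssocScheme d V) (hd : 2 ≤ d)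
    (i : ℕ) (hi1 : 1 ≤ i) (hi2 : i ≤ d - 1) (hN : S.N i = ∅) :
    ∀ j ∈ {k : Fin (d + 1) | ∃ h < i, k ∈ S.N h},
      ∀ k ∉ {k : Fin (d + 1) | ∃ h < i, k ∈ S.N h},
        S.krein 1 j k = 0 := by
  intro j hj k hk
  -- k is not a component of any hadPow l for l < i
  have hk0 : ∀ h, h < i → S.E k * S.hadPowE1 h = 0 := by
    intro h
    induction h using Nat.strong_induction_on with
    | _ h IH =>
      intro hhi
      by_contra hne
      exact hk ⟨h, hhi, hne, fun l hl => IH l hl (lt_trans hl hhi)⟩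
  by_contra hq
  have hqpos : 0 < S.krein 1 j k := lt_of_le_of_ne (S.krein_nonneg 1 j k) (Ne.symm hq)
  obtain ⟨h, hhi, hjN⟩ := hj
  have hcj : 0 < S.coeff h j :=
    lt_of_le_of_ne (S.coeff_nonneg h j)
      (Ne.symm ((S.E_mul_hadPow_ne_zero_iff h j).mp hjN.1))
  have hck : 0 < S.coeff (h + 1) k := by
    show 0 < (Fintype.card V : ℝ)⁻¹ * ∑ m, S.coeff h m * S.krein 1 m k
    have hsum : 0 < ∑ m, S.coeff h m * S.krein 1 m k :=
      Finset.sum_pos' (fun m _ => mul_nonneg (S.coeff_nonneg h m) (S.krein_nonneg 1 m k))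
        ⟨j, Finset.mem_univ j, mul_pos hcj hqpos⟩
    have hcard : (0:ℝ) < (Fintype.card V : ℝ) := by exact_mod_cast S.card_pos'
    positivity
  have hkne : S.E k * S.hadPowE1 (h + 1) ≠ 0 :=
    (S.E_mul_hadPow_ne_zero_iff (h + 1) k).mpr hck.ne'
  rcases lt_or_eq_of_le (Nat.succ_le_of_lt hhi) with hlt | heq
  · exact hkne (hk0 (h + 1) hlt)
  · have : k ∈ S.N i := by
      rw [← heq]
      exact ⟨hkne, fun l hl => hk0 l (by omega)⟩
    rw [hN] at this
    exact this
end
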